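/- Let v : ℝ → ℝ be differentiable on all of ℝ and satisfy v′(t) ≥ (v(t))² for every t ∈ ℝ. Then v ≡ 0. -/

import Mathlib

lemma riccati_aux (v : ℝ → ℝ) (hv : Differentiable ℝ v)
    (h : ∀ t : ℝ, (v t) ^ 2 ≤ deriv v t) :
    ∀ t : ℝ, v t ≤ 0 := by
  by_contra hc
  push_neg at hc
  obtain ⟨t₀, ht₀⟩ := hc
  have hmono : Monotone v := by
    apply monotone_of_deriv_nonneg hv
    intro x
    exact le_trans (sq_nonneg _) (h x)
  have hpos : ∀ t, t₀ ≤ t → 0 < v t := fun t ht => lt_of_lt_of_le ht₀ (hmono ht)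
  set g : ℝ → ℝ := fun t => -(v t)⁻¹ - t with hg
  have hgmono : MonotoneOn g (Set.Ici t₀) := by
    apply monotoneOn_of_deriv_nonneg (convex_Ici t₀)
    · apply ContinuousOn.sub _ continuousOn_id
      apply ContinuousOn.neg
      exact ContinuousOn.inv₀ hv.continuous.continuousOn
        (fun x hx => (hpos x hx).ne')
    · intro x hx
      rw [interior_Ici] at hx
      have hne : v x ≠ 0 := (hpos x hx.le).ne'
      exact (((((hv x).hasDerivAt.inv hne).neg).sub (hasDerivAt_id x)).differentiableAt).differentiableWithinAt
    · intro x hx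
      rw [interior_Ici] at hx
      have hvx : 0 < v x := hpos x hx.le
      have hne : v x ≠ 0 := hvx.ne'
      have hd : HasDerivAt g (-(-(deriv v x) / (v x) ^ 2) - 1) x :=
        ((((hv x).hasDerivAt.inv hne).neg).sub (hasDerivAt_id x))
      rw [hd.deriv]
      have h2 : (0:ℝ) < (v x) ^ 2 := pow_pos hvx 2
      have : (1:ℝ) ≤ deriv v x / (v x) ^ 2 := (one_le_div h2).mpr (h x)
      have heq : -(-(deriv v x) / (v x) ^ 2) - 1 = deriv v x / (v x) ^ 2 - 1 := by
        ring
      rw [heq]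
      linarith
  set t₁ := t₀ + (v t₀)⁻¹ with ht₁
  have hinv : 0 < (v t₀)⁻¹ := inv_pos.mpr ht₀
  have hle : t₀ ≤ t₁ := by rw [ht₁]; linarith
  have := hgmono (Set.self_mem_Ici) (Set.mem_Ici.mpr hle) hle
  simp only [hg, ht₁] at this
  have hvt₁ : 0 < v (t₀ + (v t₀)⁻¹) := hpos _ hle
  have : (v (t₀ + (v t₀)⁻¹))⁻¹ ≤ 0 := by linarith
  exact absurd (inv_pos.mpr hvt₁) (not_lt.mpr this)

/-- Riccati-type rigidity: a globally defined differentiable function `v : ℝ → ℝ`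
satisfying `v' ≥ v²` everywhere must vanish identically. -/
theorem riccati_rigidity (v : ℝ → ℝ) (hv : Differentiable ℝ v)
    (h : ∀ t : ℝ, (v t) ^ 2 ≤ deriv v t) :
    ∀ t : ℝ, v t = 0 := by
  have h1 : ∀ t : ℝ, v t ≤ 0 := riccati_aux v hv h
  set u : ℝ → ℝ := fun t => -v (-t) with hu
  have hd : ∀ t : ℝ, HasDerivAt u (deriv v (-t)) t := by
    intro t
    have h2 : HasDerivAt (fun t : ℝ => v (-t)) (deriv v (-t) * (-1)) t :=
      (hv (-t)).hasDerivAt.comp t (hasDerivAt_neg t)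
    have := h2.neg
    exact this.congr_deriv (by ring)
  have hud : Differentiable ℝ u := fun t => (hd t).differentiableAt
  have h2 : ∀ t : ℝ, (u t) ^ 2 ≤ deriv u t := by
    intro t
    rw [(hd t).deriv]
    have : (u t) ^ 2 = (v (-t)) ^ 2 := by simp [hu]
    rw [this]
    exact h (-t)
  have h3 := riccati_aux u hud h2
  intro t
  have hle := h1 t
  have hge : 0 ≤ v t := by
    have := h3 (-t)
    simp [hu] at this
    convert this using 2
  linarith
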